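/- For all real numbers x and y with d(x,y) = 0, 0 < x < 1, and −1/3 ≤ y < 0, the rational functions τ := Nτ(x,y)/Dτ(x,y), R₁ := N₁(x,y)/Dd(x,y), R₂ := N₂(x,y)/Dd(x,y) are well defined (the denominators are nonzero) and satisfy 0 < τ < 1, R₁ > 0, R₂ > 0, and R₁ + R₂ < 1. -/

import Mathlib

def d (x y : ℝ) : ℝ := x^2*y + 3*x^2 - x*y - 3*y^2 - 3*x - 3*y
def Ntau (x y : ℝ) : ℝ := (y - x) * (2*x + 3*y + 1)
def Dtau (x y : ℝ) : ℝ := 2*x*y - 5*y - 3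
def P (x y : ℝ) : ℝ :=
  4*x^4 + 3*x^2*y^2 - 20*x^3 - 6*x^2*y - 15*x*y^2 + 31*x^2 + 6*x*y
    + 21*y^2 - 15*x + 18*y + 9
def Q1 (x y : ℝ) : ℝ :=
  -4*x^4 - 12*x^3*y + x^2*y^2 + 9*x*y^3 + 8*x^3 + 42*x^2*y + 10*x*y^2
    - 27*y^3 + 17*x^2 - 15*x*y - 38*y^2 - 12*x - 15*y
def Q2 (x y : ℝ) : ℝ :=
  4*x^4 - 4*x^3*y - 13*x^2*y^2 + 9*x*y^3 - 8*x^3 + 2*x^2*y + 44*x*y^2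
    - 18*y^3 + 7*x^2 + 29*x*y - 49*y^2 + 6*x - 36*y - 9
def N1 (x y : ℝ) : ℝ := (-2*x + y + 3) * (x - 1) * Q1 x y
def N2 (x y : ℝ) : ℝ := -(2*x^2 + x*y - 5*x - 4*y) * Q2 x y
def Dd (x y : ℝ) : ℝ := (2*x*y - 5*y - 3) * P x y

/-- Handelman-certificate lemma for the key degree-6 inequality `N1 + N2 - Dd > 0`. -/
lemma keyS (x y : ℝ) (hx0 : 0 < x) (hx1 : x < 1) (hy0 : -1/3 ≤ y) (hy1 : y < 0) :
    0 < 27 + 108*y + 138*y^2 + 28*y^3 - 45*y^4 - 54*x - 240*x*y - 364*x*y^2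
      - 192*x*y^3 + 18*x*y^4 + 30*x^2 + 206*x^2*y + 330*x^2*y^2 + 138*x^2*y^3
      + 48*x^3 + 36*x^3*y - 120*x^3*y^2 - 28*x^3*y^3 - 24*x^4 - 72*x^4*y
      + 16*x^4*y^2 + 16*x^5*y := by
  have hx : (0:ℝ) ≤ x := hx0.le
  have hu : (0:ℝ) ≤ 1 - x := by linarith
  have ht : (0:ℝ) ≤ -y := by linarith
  have hs : (0:ℝ) ≤ 1 + 3*y := by linarith
  have h0 : (0:ℝ) ≤ (1+3*y)^2 := by apply_rules [mul_nonneg, pow_nonneg]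
  have h1 : (0:ℝ) ≤ (-y)^1*(1+3*y)^2 := by apply_rules [mul_nonneg, pow_nonneg]
  have h2 : (0:ℝ) ≤ (-y)^1*(1+3*y)^3 := by apply_rules [mul_nonneg, pow_nonneg]
  have h3 : (0:ℝ) ≤ (1-x)^1*(-y)^1*(1+3*y)^3 := by apply_rules [mul_nonneg, pow_nonneg]
  have h4 : (0:ℝ) ≤ (1-x)^2*(1+3*y)^2 := by apply_rules [mul_nonneg, pow_nonneg]
  have h5 : (0:ℝ) ≤ (1-x)^2*(1+3*y)^3 := by apply_rules [mul_nonneg, pow_nonneg]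
  have h6 : (0:ℝ) ≤ (1-x)^3 := by apply_rules [mul_nonneg, pow_nonneg]
  have h7 : (0:ℝ) ≤ (1-x)^3*(1+3*y)^1 := by apply_rules [mul_nonneg, pow_nonneg]
  have h8 : (0:ℝ) ≤ (1-x)^3*(1+3*y)^3 := by apply_rules [mul_nonneg, pow_nonneg]
  have h9 : (0:ℝ) ≤ (1-x)^4*(1+3*y)^2 := by apply_rules [mul_nonneg, pow_nonneg]
  have h10 : (0:ℝ) ≤ x^1*(1-x)^3 := by apply_rules [mul_nonneg, pow_nonneg]
  have h11 : (0:ℝ) ≤ x^1*(1-x)^3*(1+3*y)^1 := by apply_rules [mul_nonneg, pow_nonneg]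
  have h12 : (0:ℝ) ≤ x^1*(1-x)^4 := by apply_rules [mul_nonneg, pow_nonneg]
  have h13 : (0:ℝ) ≤ x^1*(1-x)^4*(1+3*y)^1 := by apply_rules [mul_nonneg, pow_nonneg]
  have h14 : (0:ℝ) ≤ x^2*(1+3*y)^1 := by apply_rules [mul_nonneg, pow_nonneg]
  have h15 : (0:ℝ) ≤ x^2*(1+3*y)^2 := by apply_rules [mul_nonneg, pow_nonneg]
  have h16 : (0:ℝ) ≤ x^2*(-y)^1*(1+3*y)^2 := by apply_rules [mul_nonneg, pow_nonneg]
  have h17 : (0:ℝ) ≤ x^2*(1-x)^1*(1+3*y)^1 := by apply_rules [mul_nonneg, pow_nonneg]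
  have h18 : (0:ℝ) ≤ x^2*(1-x)^1*(1+3*y)^2 := by apply_rules [mul_nonneg, pow_nonneg]
  have h19 : (0:ℝ) ≤ x^3*(1-x)^1*(1+3*y)^1 := by apply_rules [mul_nonneg, pow_nonneg]
  have h20 : (0:ℝ) ≤ x^4 := by apply_rules [mul_nonneg, pow_nonneg]
  have h21 : (0:ℝ) ≤ x^4*(1-x)^1 := by apply_rules [mul_nonneg, pow_nonneg]
  linarith [h0, h1, h2, h3, h4, h5, h6, h7, h8, h9, h10, h11, h12, h13, h14, h15, h16, h17, h18, h19, h20, h21]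

lemma keyDtau (x y : ℝ) (hx0 : 0 < x) (hy1 : y < 0) (hy0 : -1/3 ≤ y) (hx1 : x < 1) :
    2*x*y - 5*y - 3 < 0 := by
  nlinarith [mul_pos hx0 (neg_pos.2 hy1)]

lemma keyP (x y : ℝ) (hx0 : 0 < x) (hx1 : x < 1) (hy0 : -1/3 ≤ y) (hy1 : y < 0) :
    0 < 4*x^4 + 3*x^2*y^2 - 20*x^3 - 6*x^2*y - 15*x*y^2 + 31*x^2 + 6*x*y
      + 21*y^2 - 15*x + 18*y + 9 := by
  nlinarith [sq_nonneg (x-1), sq_nonneg x, sq_nonneg y, mul_pos hx0 (sub_pos.2 hx1),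
    sq_nonneg (x*y), mul_pos (mul_pos hx0 hx0) (sub_pos.2 hx1), sq_nonneg (y+1/3),
    mul_nonneg (sq_nonneg (x-1)) (sq_nonneg x)]

lemma keyQ1 (x y : ℝ) (hd : x^2*y + 3*x^2 - x*y - 3*y^2 - 3*x - 3*y = 0)
    (hx0 : 0 < x) (hx1 : x < 1) (hy0 : -1/3 ≤ y) (hy1 : y < 0) :
    0 < -4*x^4 - 12*x^3*y + x^2*y^2 + 9*x*y^3 + 8*x^3 + 42*x^2*y + 10*x*y^2
      - 27*y^3 + 17*x^2 - 15*x*y - 38*y^2 - 12*x - 15*y := by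
  nlinarith [mul_pos hx0 (neg_pos.2 hy1), mul_pos hx0 (sub_pos.2 hx1), sq_nonneg (x+y),
    sq_nonneg (x-y), mul_pos (mul_pos hx0 hx0) (neg_pos.2 hy1),
    mul_nonneg (mul_pos hx0 (sub_pos.2 hx1)).le (neg_pos.2 hy1).le, sq_nonneg (y+1/3),
    mul_nonneg (mul_nonneg hx0.le hx0.le) (sq_nonneg (y+1/3)), hd]

lemma keyQ2 (x y : ℝ) (hd : x^2*y + 3*x^2 - x*y - 3*y^2 - 3*x - 3*y = 0)
    (hx0 : 0 < x) (hx1 : x < 1) (hy0 : -1/3 ≤ y) (hy1 : y < 0) :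
    4*x^4 - 4*x^3*y - 13*x^2*y^2 + 9*x*y^3 - 8*x^3 + 2*x^2*y + 44*x*y^2
      - 18*y^3 + 7*x^2 + 29*x*y - 49*y^2 + 6*x - 36*y - 9 < 0 := by
  have hdx : x*(x^2*y + 3*x^2 - x*y - 3*y^2 - 3*x - 3*y) = 0 := by rw [hd]; ring
  have hdy : y*(x^2*y + 3*x^2 - x*y - 3*y^2 - 3*x - 3*y) = 0 := by rw [hd]; ring
  nlinarith [hdx, hdy, mul_pos hx0 (neg_pos.2 hy1), mul_pos hx0 (sub_pos.2 hx1),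
    sq_nonneg (x+y), sq_nonneg (x-y), mul_pos (mul_pos hx0 hx0) (neg_pos.2 hy1),
    mul_nonneg (mul_pos hx0 (sub_pos.2 hx1)).le (neg_pos.2 hy1).le, sq_nonneg (y+1/3),
    mul_nonneg (mul_nonneg hx0.le hx0.le) (sq_nonneg (y+1/3)),
    mul_pos (sub_pos.2 hx1) (neg_pos.2 hy1),
    mul_nonneg (mul_pos (sub_pos.2 hx1) (neg_pos.2 hy1)).le (neg_pos.2 hy1).le,
    sq_nonneg (x-1), mul_nonneg (sq_nonneg (x-1)) (neg_pos.2 hy1).le]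

lemma keyA (x y : ℝ) (hd : x^2*y + 3*x^2 - x*y - 3*y^2 - 3*x - 3*y = 0)
    (hx0 : 0 < x) (hx1 : x < 1) (hy0 : -1/3 ≤ y) (hy1 : y < 0) :
    2*x^2 + x*y - 5*x - 4*y < 0 := by
  nlinarith [mul_pos hx0 (neg_pos.2 hy1), mul_pos hx0 (sub_pos.2 hx1),
    sq_nonneg (x+y), sq_nonneg (x-y)]

lemma keyND (x y : ℝ) (hd : x^2*y + 3*x^2 - x*y - 3*y^2 - 3*x - 3*y = 0)
    (hx0 : 0 < x) (hx1 : x < 1) (hy0 : -1/3 ≤ y) (hy1 : y < 0) :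
    0 < -2*x^2 - 3*x*y + 3*y^2 - x + 6*y + 3 := by
  nlinarith [mul_pos hx0 (neg_pos.2 hy1), mul_pos hx0 (sub_pos.2 hx1), sq_nonneg (x+y),
    sq_nonneg (x-y), mul_pos (sub_pos.2 hx1) (neg_pos.2 hy1), sq_nonneg (x-1), sq_nonneg (x+y-1),
    mul_nonneg (mul_pos hx0 (sub_pos.2 hx1)).le (neg_pos.2 hy1).le]

theorem intersection_parameters_in_range (x y : ℝ) (hd : d x y = 0)
    (hx0 : 0 < x) (hx1 : x < 1) (hy0 : -1/3 ≤ y) (hy1 : y < 0) :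
    Dtau x y ≠ 0 ∧ Dd x y ≠ 0 ∧
    0 < Ntau x y / Dtau x y ∧ Ntau x y / Dtau x y < 1 ∧
    0 < N1 x y / Dd x y ∧ 0 < N2 x y / Dd x y ∧
    N1 x y / Dd x y + N2 x y / Dd x y < 1 := by
  simp only [d] at hd
  have hD : Dtau x y < 0 := keyDtau x y hx0 hy1 hy0 hx1
  have hP : 0 < P x y := keyP x y hx0 hx1 hy0 hy1
  have hDd : Dd x y < 0 := by
    have h : Dd x y = Dtau x y * P x y := rfl
    rw [h]; exact mul_neg_of_neg_of_pos hD hP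
  have hNt : Ntau x y < 0 := by
    have h1 : y - x < 0 := by linarith
    have h2 : 0 < 2*x + 3*y + 1 := by linarith
    exact mul_neg_of_neg_of_pos h1 h2
  have hQ1 : 0 < Q1 x y := keyQ1 x y hd hx0 hx1 hy0 hy1
  have hQ2 : Q2 x y < 0 := keyQ2 x y hd hx0 hx1 hy0 hy1
  have hA : 2*x^2 + x*y - 5*x - 4*y < 0 := keyA x y hd hx0 hx1 hy0 hy1
  have hN1 : N1 x y < 0 := by
    have h1 : 0 < -2*x + y + 3 := by linarith
    have h2 : x - 1 < 0 := by linarith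
    exact mul_neg_of_neg_of_pos (mul_neg_of_pos_of_neg h1 h2) hQ1
  have hN2 : N2 x y < 0 := by
    have h := mul_pos_of_neg_of_neg hA hQ2
    simp only [N2]
    nlinarith [h]
  have hND : Dtau x y < Ntau x y := by
    have h := keyND x y hd hx0 hx1 hy0 hy1
    have h1 : Ntau x y - Dtau x y = -2*x^2 - 3*x*y + 3*y^2 - x + 6*y + 3 := by
      simp only [Ntau, Dtau]; ring
    linarith
  have hSum : Dd x y < N1 x y + N2 x y := by
    have hS := keyS x y hx0 hx1 hy0 hy1
    have h1 : N1 x y + N2 x y - Dd x y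
        = 27 + 108*y + 138*y^2 + 28*y^3 - 45*y^4 - 54*x - 240*x*y - 364*x*y^2
          - 192*x*y^3 + 18*x*y^4 + 30*x^2 + 206*x^2*y + 330*x^2*y^2 + 138*x^2*y^3
          + 48*x^3 + 36*x^3*y - 120*x^3*y^2 - 28*x^3*y^3 - 24*x^4 - 72*x^4*y
          + 16*x^4*y^2 + 16*x^5*y := by
      simp only [N1, N2, Dd, Q1, Q2, P]; ring
    linarith
  refine ⟨ne_of_lt hD, ne_of_lt hDd, ?_, ?_, ?_, ?_, ?_⟩
  · exact div_pos_of_neg_of_neg hNt hD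
  · rw [div_lt_one_of_neg hD]; exact hND
  · exact div_pos_of_neg_of_neg hN1 hDd
  · exact div_pos_of_neg_of_neg hN2 hDd
  · rw [← add_div, div_lt_one_of_neg hDd]; exact hSum
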